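/- Let E be a strongly connected finite directed graph with no sources, and let w be a vertex. For every n ≥ 1 there is a cycle β at w with |β| ≡ gcd(P_E, n) (mod n). -/

import Mathlib

/-- A directed graph: vertices, edges, range and source maps. -/
structure DGraph where
  V : Type
  E : Type
  r : E → V
  s : E → V

namespace DGraph

variable {G : DGraph}

/-- A path in a directed graph: a word of composable edges together with a source vertex
(so that length-zero paths are vertices). -/
structure Path (G : DGraph) where
  src : G.V
  edges : List G.E
  chain : List.Chain' (fun a b => G.s a = G.r b) edges
  srcEq : ∀ a ∈ edges.getLast?, G.s a = src

/-- The range of a path. -/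
def Path.rng (p : G.Path) : G.V := p.edges.head?.elim p.src G.r

/-- The length of a path. -/
def Path.length (p : G.Path) : ℕ := p.edges.length

/-- The length-zero path at a vertex. -/
def Path.nil (G : DGraph) (v : G.V) : G.Path :=
  ⟨v, [], List.isChain_nil, by simp⟩

@[simp] theorem Path.length_nil (v : G.V) : (Path.nil G v).length = 0 := rfl

/-- Prepend an edge to a path. -/
def Path.cons (e : G.E) (p : G.Path) (h : p.rng = G.s e) : G.Path where
  src := p.src
  edges := e :: p.edges
  chain := by
    refine List.isChain_cons.mpr ?_
    refine ⟨fun b hb => ?_, p.chain⟩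
    rw [← h]
    simp [Path.rng, Option.mem_def.mp hb]
  srcEq := by
    intro a ha
    cases hp : p.edges with
    | nil =>
      rw [hp] at ha
      simp only [List.getLast?_singleton, Option.mem_def, Option.some.injEq] at ha
      subst ha
      have h0 : p.rng = p.src := by simp [Path.rng, hp]
      rw [← h, h0]
    | cons f t =>
      apply p.srcEq
      rw [hp]
      rw [hp, List.getLast?_cons_cons] at ha
      exact ha

@[simp] theorem Path.length_cons (e : G.E) (p : G.Path) (h : p.rng = G.s e) :
    (Path.cons e p h).length = p.length + 1 := rfl

/-- Remove the first edge of a path. -/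
def Path.tail (p : G.Path) : G.Path where
  src := p.src
  edges := p.edges.tail
  chain := p.chain.tail
  srcEq := by
    intro a ha
    apply p.srcEq
    cases hp : p.edges with
    | nil => rw [hp] at ha; simp at ha
    | cons f t =>
      rw [hp] at ha
      simp only [List.tail_cons] at ha
      cases t with
      | nil => simp at ha
      | cons g u => rw [List.getLast?_cons_cons]; exact ha

@[simp] theorem Path.length_tail (p : G.Path) : p.tail.length = p.length - 1 := by
  simp [Path.tail, Path.length]

/-- The initial segment of a path consisting of its first `k` edges. -/
def Path.take (p : G.Path) (k : ℕ) : G.Path where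
  src := (p.edges.drop k).head?.elim p.src G.r
  edges := p.edges.take k
  chain := p.chain.take k
  srcEq := by
    intro a ha
    have hc : List.Chain' (fun a b => G.s a = G.r b) (p.edges.take k ++ p.edges.drop k) := by
      rw [List.take_append_drop]; exact p.chain
    replace hc := List.isChain_append.mp hc
    obtain ⟨-, -, hadj⟩ := hc
    cases hd : p.edges.drop k with
    | nil =>
      have htake : p.edges.take k = p.edges := by
        have h1 := List.take_append_drop k p.edges
        rw [hd, List.append_nil] at h1
        exact h1
      simp only [List.head?_nil, Option.elim]
      exact p.srcEq a (htake ▸ ha)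
    | cons f t =>
      simp only [List.head?_cons, Option.elim]
      exact hadj a ha f (by rw [hd]; simp)

/-- `[μ]_n` : the initial segment of `μ` of length `|μ| mod n`. -/
def Path.trunc (m : ℕ) (p : G.Path) : G.Path := p.take (p.length % m)

/-- Concatenation of paths, `p` followed after `q` (so `p.append q` has range the range of `p`
and source the source of `q`). -/
def Path.append (p q : G.Path) (h : p.src = q.rng) : G.Path where
  src := q.src
  edges := p.edges ++ q.edges
  chain := by
    refine List.isChain_append.mpr ?_
    refine ⟨p.chain, q.chain, fun a ha b hb => ?_⟩
    rw [p.srcEq a ha, h]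
    simp [Path.rng, Option.mem_def.mp hb]
  srcEq := by
    intro a ha
    cases hq : q.edges with
    | nil =>
      rw [hq, List.append_nil] at ha
      have h0 : q.rng = q.src := by simp [Path.rng, hq]
      rw [p.srcEq a ha, h, h0]
    | cons f t =>
      apply q.srcEq
      rw [hq]
      rw [hq, List.getLast?_append_cons] at ha
      exact ha

/-- A graph is row-finite if every vertex receives finitely many edges. -/
def RowFinite (G : DGraph) : Prop := ∀ v : G.V, {e : G.E | G.r e = v}.Finite

/-- A graph has no sources if every vertex receives an edge. -/
def NoSources (G : DGraph) : Prop := ∀ v : G.V, ∃ e : G.E, G.r e = v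

/-- A graph is strongly connected if for all vertices `v, w` there is a path from `w` to `v`. -/
def StronglyConnected (G : DGraph) : Prop :=
  ∀ v w : G.V, ∃ p : G.Path, p.src = w ∧ p.rng = v

/-- The set of paths of length less than `n`. -/
abbrev PathLt (G : DGraph) (n : ℕ) := {p : G.Path // p.length < n}

/-- The graph `E(n)` of Kribs and Solel: vertices are paths of length `< n`, and edges
are pairs `(e, μ)` with `r(μ) = s(e)` and `|μ| < n`, with source `μ` and range `[eμ]_n`. -/
def Eln (G : DGraph) (n : ℕ) : DGraph where
  V := PathLt G n
  E := {q : G.E × G.Path // q.2.length + 1 ≤ n ∧ q.2.rng = G.s q.1}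
  s := fun q => ⟨q.1.2, Nat.lt_of_succ_le q.2.1⟩
  r := fun q =>
    if h : q.1.2.length + 1 < n then
      ⟨Path.cons q.1.1 q.1.2 q.2.2, by simpa using h⟩
    else
      ⟨Path.nil G (G.r q.1.1), Nat.lt_of_lt_of_le (Nat.succ_pos _) q.2.1⟩

/-- A vertex of `E`, regarded as a length-zero vertex of `E(n)`. -/
def vtx (G : DGraph) (n : ℕ) (hn : 0 < n) (v : G.V) : PathLt G n :=
  ⟨Path.nil G v, by simpa using hn⟩

/-- `d` is the greatest common divisor of the set `S` of natural numbers. -/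
def IsGCDOf (d : ℕ) (S : Set ℕ) : Prop :=
  (∀ k ∈ S, d ∣ k) ∧ ∀ c : ℕ, (∀ k ∈ S, c ∣ k) → c ∣ d

/-- The set of lengths of (nonempty) cycles of `G`. -/
def CycleLengths (G : DGraph) : Set ℕ :=
  {k | ∃ p : G.Path, p.rng = p.src ∧ p.edges ≠ [] ∧ p.length = k}

/-- The set of lengths of (nonempty) cycles of `G` based at `v`. -/
def CycleLengthsAt (G : DGraph) (v : G.V) : Set ℕ :=
  {k | ∃ p : G.Path, p.src = v ∧ p.rng = v ∧ p.edges ≠ [] ∧ p.length = k}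

/-- The relation `v ∼ w` iff there is a path from `w` to `v` whose length is divisible by `d`. -/
def SimRel (G : DGraph) (d : ℕ) (v w : G.V) : Prop :=
  ∃ p : G.Path, p.src = w ∧ p.rng = v ∧ d ∣ p.length

/-- The connected-component relation of a graph: the smallest equivalence relation
identifying the range and the source of each edge. -/
def Comp (G : DGraph) : G.V → G.V → Prop :=
  Relation.EqvGen (fun a b => ∃ f : G.E, G.r f = a ∧ G.s f = b)

/-- The adjacency matrix of `E(n)` acting on vectors indexed by `E^{<n}`. -/
noncomputable def Aact (G : DGraph) (n : ℕ) (g : PathLt G n → ℝ) (v : PathLt G n) : ℝ :=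
  ∑ᶠ (f : (Eln G n).E) (_ : (Eln G n).r f = v), g ((Eln G n).s f)

/-- The pushforward of a vector on `E^{<n}` along `ν ↦ [ν]_m`. -/
noncomputable def pushf (G : DGraph) (n m : ℕ) (g : PathLt G n → ℝ) (μ : PathLt G m) : ℝ :=
  ∑ᶠ (ν : PathLt G n) (_ : Path.trunc m ν.1 = μ.1), g ν

instance : TopologicalSpace G.Path := ⊥

/-- The inverse limit `lim← E^{<n_k}` along the truncation maps. -/
def InvLim (G : DGraph) (n : ℕ → ℕ) : Type :=
  {f : (k : ℕ) → PathLt G (n k) // ∀ k, Path.trunc (n k) (f (k+1)).1 = (f k).1}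

instance (G : DGraph) (n : ℕ → ℕ) : TopologicalSpace (InvLim G n) :=
  inferInstanceAs (TopologicalSpace
    {f : (k : ℕ) → PathLt G (n k) // ∀ k, Path.trunc (n k) (f (k+1)).1 = (f k).1})

noncomputable instance (G : DGraph) (n : ℕ → ℕ) : MeasurableSpace (InvLim G n) := borel _

end DGraph


namespace DGraph

variable {G : DGraph}

theorem Path.rng_append' (p q : G.Path) (h : p.src = q.rng) :
    (p.append q h).rng = p.rng := by
  rcases hp : p.edges with _ | ⟨a, t⟩
  · have h1 : (p.append q h).rng = q.rng := by
      simp [Path.rng, Path.append, hp]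
    rw [h1, ← h]
    simp [Path.rng, hp]
  · simp [Path.rng, Path.append, hp]

theorem Path.length_append' (p q : G.Path) (h : p.src = q.rng) :
    (p.append q h).length = p.length + q.length := by
  simp [Path.length, Path.append]

theorem Path.rng_cons' (e : G.E) (p : G.Path) (h : p.rng = G.s e) :
    (Path.cons e p h).rng = G.r e := rfl

/-- There is a nonempty cycle at every vertex. -/
theorem exists_cycle_at (hsc : StronglyConnected G) (hns : NoSources G) (w : G.V) :
    ∃ c : G.Path, c.src = w ∧ c.rng = w ∧ c.edges ≠ [] := by
  obtain ⟨e, he⟩ := hns w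
  obtain ⟨p, hp1, hp2⟩ := hsc (G.s e) w
  exact ⟨Path.cons e p hp2, hp1, by rw [Path.rng_cons', he], by simp [Path.cons]⟩

/-- Cycle lengths at a vertex are closed under addition. -/
theorem cycleLengthsAt_add {w : G.V} {a b : ℕ}
    (ha : a ∈ CycleLengthsAt G w) (hb : b ∈ CycleLengthsAt G w) :
    a + b ∈ CycleLengthsAt G w := by
  obtain ⟨p, hp1, hp2, hp3, hp4⟩ := ha
  obtain ⟨q, hq1, hq2, hq3, hq4⟩ := hb
  refine ⟨p.append q (by rw [hp1, hq2]), ?_, ?_, ?_, ?_⟩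
  · exact hq1
  · rw [Path.rng_append']; exact hp2
  · show p.edges ++ q.edges ≠ []
    simp [hp3]
  · rw [Path.length_append', hp4, hq4]

/-- Every cycle length of the graph is a difference of two cycle lengths at `w`. -/
theorem exists_cycleLengthsAt_add (hsc : StronglyConnected G) (hns : NoSources G)
    (w : G.V) {m : ℕ} (hm : m ∈ CycleLengths G) :
    ∃ a, a ∈ CycleLengthsAt G w ∧ a + m ∈ CycleLengthsAt G w := by
  obtain ⟨c0, hc0s, hc0r, hc0ne⟩ := exists_cycle_at hsc hns w
  obtain ⟨γ, hγrs, hγne, hγlen⟩ := hm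
  obtain ⟨q, hq1, hq2⟩ := hsc γ.src w
  obtain ⟨p, hp1, hp2⟩ := hsc w γ.src
  have hqγ : γ.src = q.rng := hq2.symm
  set inner := γ.append q hqγ with hinner
  have hinnerrng : inner.rng = γ.src := by rw [hinner, Path.rng_append', hγrs]
  set c2 := p.append inner (by rw [hp1, hinnerrng]) with hc2
  have hc2rng : c2.rng = w := by rw [hc2, Path.rng_append', hp2]
  have hc2src : c2.src = w := by
    show inner.src = w
    exact hq1
  set c1 := p.append q (by rw [hp1, hq2]) with hc1
  have hc1rng : c1.rng = w := by rw [hc1, Path.rng_append', hp2]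
  have hc1src : c1.src = w := hq1
  set a := c0.append c1 (by rw [hc0s, hc1rng]) with ha
  set b := c0.append c2 (by rw [hc0s, hc2rng]) with hb
  refine ⟨a.length, ⟨a, hc1src, by rw [ha, Path.rng_append', hc0r], ?_, rfl⟩,
    ⟨b, hc2src, by rw [hb, Path.rng_append', hc0r], ?_, ?_⟩⟩
  · show c0.edges ++ c1.edges ≠ []
    simp [hc0ne]
  · show c0.edges ++ c2.edges ≠ []
    simp [hc0ne]
  · simp only [hb, ha, hc2, hc1, hinner, Path.length_append']
    omega

/-- Positive multiples of cycle lengths at `w` are cycle lengths at `w`. -/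
theorem cycleLengthsAt_mul {w : G.V} {s : ℕ} (hs : s ∈ CycleLengthsAt G w) :
    ∀ k, 0 < k → k * s ∈ CycleLengthsAt G w := by
  intro k hk
  induction k with
  | zero => omega
  | succ k ih =>
    rcases Nat.eq_zero_or_pos k with h | h
    · subst h; simpa using hs
    · have := cycleLengthsAt_add (ih h) hs
      have heq : k * s + s = (k+1) * s := by ring
      rwa [heq] at this

end DGraph

open DGraph in
/-- Let `E` be a strongly connected finite directed graph with no sources
and `w` a vertex.  For every `n ≥ 1` there is a cycle `β` at `w` with
`|β| ≡ gcd(P_E, n) (mod n)`. -/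
theorem exists_cycle_length_cong_gcd (G : DGraph) [Finite G.V] [Finite G.E]
    (hsc : StronglyConnected G) (hns : NoSources G) (w : G.V)
    (P : ℕ) (hP : IsGCDOf P (CycleLengths G)) (n : ℕ) (hn : 0 < n) :
    ∃ β : G.Path, β.src = w ∧ β.rng = w ∧ β.edges ≠ [] ∧
      β.length % n = Nat.gcd P n % n := by
  classical
  obtain ⟨c0, hc0s, hc0r, hc0ne⟩ := exists_cycle_at hsc hns w
  have hs0 : c0.length ∈ CycleLengthsAt G w := ⟨c0, hc0s, hc0r, hc0ne, rfl⟩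
  rcases eq_or_lt_of_le (Nat.succ_le_of_lt hn) with h1 | h2
  · have hn1 : n = 1 := h1.symm
    subst hn1
    exact ⟨c0, hc0s, hc0r, hc0ne, by simp [Nat.mod_one]⟩
  -- now 2 ≤ n
  set S := CycleLengthsAt G w with hSdef
  set H : AddSubgroup ℤ := AddSubgroup.closure ((Nat.cast '' S) ∪ {(n:ℤ)}) with hH
  have hSH : ∀ s ∈ S, (s:ℤ) ∈ H := fun s hs =>
    AddSubgroup.subset_closure (Or.inl ⟨s, hs, rfl⟩)
  have hnH : (n:ℤ) ∈ H := AddSubgroup.subset_closure (Or.inr rfl)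
  obtain ⟨d, hd⟩ := Int.subgroup_cyclic H
  have hdvd : ∀ x : ℤ, x ∈ H → d ∣ x := by
    intro x hx
    rw [hd, AddSubgroup.mem_closure_singleton] at hx
    obtain ⟨k, hk⟩ := hx
    exact ⟨k, by rw [← hk, smul_eq_mul]; ring⟩
  have hdm : ∀ m ∈ CycleLengths G, d.natAbs ∣ m := by
    intro m hm
    obtain ⟨a, haS, habS⟩ := exists_cycleLengthsAt_add hsc hns w hm
    have hmem : (m:ℤ) ∈ H := by
      have h' := H.sub_mem (hSH _ habS) (hSH _ haS)
      have he : ((a + m : ℕ) : ℤ) - ((a:ℕ):ℤ) = (m:ℤ) := by push_cast; ring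
      rwa [he] at h'
    exact Int.natCast_dvd_natCast.mp (Int.natAbs_dvd.mpr (hdvd _ hmem))
  have hdP : d.natAbs ∣ P := hP.2 _ hdm
  have hdn : d.natAbs ∣ n := Int.natCast_dvd_natCast.mp (Int.natAbs_dvd.mpr (hdvd _ hnH))
  have hgH : ((Nat.gcd P n : ℕ) : ℤ) ∈ H := by
    rw [hd, AddSubgroup.mem_closure_singleton]
    obtain ⟨k, hk⟩ := Int.natAbs_dvd.mp
      (Int.natCast_dvd_natCast.mpr (Nat.dvd_gcd hdP hdn))
    exact ⟨k, by rw [smul_eq_mul, hk]; ring⟩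
  have key : ∀ x : ℤ, x ∈ H → ∃ s ∈ S, ((s:ℕ) : ZMod n) = (x : ZMod n) := by
    intro x hx
    rw [hH] at hx
    refine AddSubgroup.closure_induction
      (p := fun (y : ℤ) (_ : y ∈ AddSubgroup.closure ((Nat.cast '' S) ∪ {(n:ℤ)})) => ∃ s ∈ S, ((s:ℕ) : ZMod n) = ((y : ℤ) : ZMod n)) ?_ ?_ ?_ ?_ hx
    · rintro y (⟨s, hs, rfl⟩ | rfl)
      · exact ⟨s, hs, by push_cast; ring⟩
      · refine ⟨n * c0.length, cycleLengthsAt_mul hs0 n hn, ?_⟩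
        push_cast
        simp [ZMod.natCast_self]
    · refine ⟨n * c0.length, cycleLengthsAt_mul hs0 n hn, ?_⟩
      push_cast
      simp [ZMod.natCast_self]
    · rintro y z - - ⟨s, hs, hse⟩ ⟨t, ht, hte⟩
      refine ⟨s + t, cycleLengthsAt_add hs ht, ?_⟩
      push_cast
      rw [hse, hte]
    · rintro y - ⟨s, hs, hse⟩
      refine ⟨(n - 1) * s, cycleLengthsAt_mul hs (n-1) (by omega), ?_⟩
      rw [Nat.cast_mul, Nat.cast_sub hn, Nat.cast_one, ZMod.natCast_self, zero_sub,
        neg_one_mul, hse]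
      push_cast
      ring
  obtain ⟨s, hs, hcast⟩ := key _ hgH
  obtain ⟨β, hβ1, hβ2, hβ3, hβ4⟩ := hs
  refine ⟨β, hβ1, hβ2, hβ3, ?_⟩
  rw [hβ4]
  have : (s : ZMod n) = ((Nat.gcd P n : ℕ) : ZMod n) := by
    rw [hcast]; push_cast; ring
  exact (ZMod.natCast_eq_natCast_iff _ _ _).mp this
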